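/- With Î_n^{(k)} as above, the IsoScore satisfies the closed formula ι(Î_n^{(k)}) = (k − 1)/(n − 1). -/

import Mathlib

open Real Finset

theorem isoScore_Ink (n k : ℕ) (hn : 2 ≤ n) (hk1 : 1 ≤ k) (hkn : k ≤ n)
    (v : Fin n → ℝ) (hv : v = fun i : Fin n => if (i : ℕ) < k then Real.sqrt ((n : ℝ) / k) else 0) :
    (((n : ℝ) - (Real.sqrt (∑ i, (v i - 1) ^ 2) /
        Real.sqrt (2 * ((n : ℝ) - Real.sqrt n))) ^ 2 * ((n : ℝ) - Real.sqrt n)) ^ 2 - n) /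
      ((n : ℝ) * ((n : ℝ) - 1)) = ((k : ℝ) - 1) / ((n : ℝ) - 1) := by
  subst hv
  have hk0 : (0:ℝ) < k := by exact_mod_cast hk1
  have hn0 : (0:ℝ) < n := by positivity
  have hn2 : (2:ℝ) ≤ n := by exact_mod_cast hn
  have hkn' : (k:ℝ) ≤ n := by exact_mod_cast hkn
  have hsn : Real.sqrt n < n := by
    have h1 : Real.sqrt n < Real.sqrt (n^2) := by
      apply Real.sqrt_lt_sqrt (le_of_lt hn0)
      nlinarith
    rwa [Real.sqrt_sq (le_of_lt hn0)] at h1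
  have hsnk : Real.sqrt ((n:ℝ) * k) ≤ n := by
    have h1 : Real.sqrt ((n:ℝ)*k) ≤ Real.sqrt (n^2) := by
      apply Real.sqrt_le_sqrt; nlinarith
    rwa [Real.sqrt_sq (le_of_lt hn0)] at h1
  set a : ℝ := Real.sqrt ((n:ℝ)/k) with ha
  have ha2 : a^2 = (n:ℝ)/k := Real.sq_sqrt (by positivity)
  have hka : (k:ℝ) * a = Real.sqrt ((n:ℝ) * k) := by
    rw [ha, show (k:ℝ) = Real.sqrt ((k:ℝ)^2) from (Real.sqrt_sq hk0.le).symm,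
      ← Real.sqrt_mul (by positivity)]
    congr 1
    field_simp
    ring_nf
    rw [Real.sq_sqrt (by positivity)]
  have hsum : ∑ i : Fin n, ((if (i:ℕ) < k then a else 0) - 1)^2
      = 2 * ((n:ℝ) - Real.sqrt ((n:ℝ) * k)) := by
    rw [Fin.sum_univ_eq_sum_range (fun i => ((if i < k then a else 0) - 1)^2)]
    rw [Finset.range_eq_Ico, ← Finset.sum_Ico_consecutive _ (Nat.zero_le k) hkn]
    have e1 : ∑ i ∈ Finset.Ico 0 k, ((if i < k then a else 0) - 1)^2
        = ∑ _i ∈ Finset.Ico 0 k, (a-1)^2 :=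
      Finset.sum_congr rfl (fun i hi => by rw [if_pos (Finset.mem_Ico.mp hi).2])
    have e2 : ∑ i ∈ Finset.Ico k n, ((if i < k then a else 0) - 1)^2
        = ∑ _i ∈ Finset.Ico k n, (1:ℝ) :=
      Finset.sum_congr rfl (fun i hi => by
        rw [if_neg (not_lt.mpr (Finset.mem_Ico.mp hi).1)]; norm_num)
    rw [e1, e2, Finset.sum_const, Finset.sum_const, Nat.card_Ico, Nat.card_Ico]
    have hck : ((k - 0 : ℕ) : ℝ) = (k:ℝ) := by simp
    have hcn : ((n - k : ℕ) : ℝ) = (n:ℝ) - k := by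
      push_cast [Nat.cast_sub hkn]; ring
    rw [nsmul_eq_mul, nsmul_eq_mul, hck, hcn]
    have hkaa : (k:ℝ) * a^2 = n := by rw [ha2]; field_simp
    nlinarith [hka, hkaa]
  simp only []
  rw [hsum]
  have hb : (0:ℝ) < 2 * ((n:ℝ) - Real.sqrt n) := by nlinarith
  have hdiv : (Real.sqrt (2 * ((n:ℝ) - Real.sqrt ((n:ℝ)*k))) /
      Real.sqrt (2 * ((n:ℝ) - Real.sqrt n))) ^ 2
      = ((n:ℝ) - Real.sqrt ((n:ℝ)*k)) / ((n:ℝ) - Real.sqrt n) := by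
    rw [div_pow, Real.sq_sqrt (by nlinarith), Real.sq_sqrt hb.le]
    rw [mul_div_mul_left _ _ (by norm_num : (2:ℝ) ≠ 0)]
  rw [hdiv, div_mul_cancel₀ _ (by nlinarith : (n:ℝ) - Real.sqrt n ≠ 0)]
  have : ((n:ℝ) - ((n:ℝ) - Real.sqrt ((n:ℝ)*k)))^2 = (n:ℝ)*k := by
    rw [sub_sub_cancel, Real.sq_sqrt (by positivity)]
  rw [this]
  have hn1 : (n:ℝ) - 1 ≠ 0 := by nlinarith
  field_simp
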